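/- Suppose 0 < 1/n ≪ μ' ≪ α ≪ γ, ε ≪ δ ≪ 1. Let 𝒢 = {G_1, …, G_n} be a collection of bipartite graphs on a common vertex partition V = V_1 ∪ V_2 with |V_1| = |V_2| = n. If 𝒢 is (γ, α, ε, δ)-stable, then 𝒢 is μ'-nice, i.e., for every A ⊆ V_1 and B ⊆ V_2 with |A| = |B| = ⌊n/2⌋, Σ_{i∈[n]} e_{G_i}(A,B) ≥ μ'n³. -/

import Mathlib

open Finset
open scoped Classical symmDiff

noncomputable def dRin {n : ℕ} (G : Fin n → Fin n → Prop) (v : Fin n)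
    (S : Finset (Fin n)) : ℕ :=
  Nat.card {w : Fin n // w ∈ S ∧ G v w}

noncomputable def dLin {n : ℕ} (G : Fin n → Fin n → Prop) (w : Fin n)
    (S : Finset (Fin n)) : ℕ :=
  Nat.card {v : Fin n // v ∈ S ∧ G v w}

/-- `e_G(A, B)`: number of edges between `A ⊆ V₁` and `B ⊆ V₂`. -/
noncomputable def eBip {n : ℕ} (G : Fin n → Fin n → Prop)
    (A B : Finset (Fin n)) : ℕ :=
  Nat.card {p : Fin n × Fin n // p.1 ∈ A ∧ p.2 ∈ B ∧ G p.1 p.2}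

/-- A balanced bipartite graph `G` is `μ`-nice if `e_G(A,B) ≥ μn²` whenever `A ⊆ V₁`,
`B ⊆ V₂` have size at least `(1/2 − μ)n`. -/
def isNice {n : ℕ} (μ : ℝ) (G : Fin n → Fin n → Prop) : Prop :=
  ∀ A B : Finset (Fin n), (1/2 - μ) * (n : ℝ) ≤ A.card → (1/2 - μ) * (n : ℝ) ≤ B.card →
    μ * (n : ℝ) ^ 2 ≤ (eBip G A B : ℝ)

/-- `G` is `ε`-extremal if it is not `ε⁵`-nice. -/
def isExtremal {n : ℕ} (ε : ℝ) (G : Fin n → Fin n → Prop) : Prop :=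
  ¬ isNice (ε ^ 5) G

/-- `(A1, B1, C1, A2, B2, C2)` is a characteristic partition of the `ε`-extremal
balanced bipartite graph `G`. -/
def isCharPart {n : ℕ} (ε : ℝ) (G : Fin n → Fin n → Prop)
    (A1 B1 C1 A2 B2 C2 : Finset (Fin n)) : Prop :=
  (A1 ∪ B1 ∪ C1 = univ ∧ A1.card + B1.card + C1.card = n) ∧
  (A2 ∪ B2 ∪ C2 = univ ∧ A2.card + B2.card + C2.card = n) ∧
  (A1.card : ℝ) = (1/2 - ε) * n ∧ (B1.card : ℝ) = (1/2 - ε) * n ∧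
  (C1.card : ℝ) = 2 * ε * n ∧
  (A2.card : ℝ) = (1/2 - ε) * n ∧ (B2.card : ℝ) = (1/2 - ε) * n ∧
  (C2.card : ℝ) = 2 * ε * n ∧
  (∀ v ∈ A2, (1/2 - 2*ε) * (n : ℝ) ≤ dLin G v A1) ∧
  (∀ v ∈ B2, (1/2 - 2*ε) * (n : ℝ) ≤ dLin G v B1) ∧
  (∀ v ∈ A1, (1/2 - 2*ε) * (n : ℝ) ≤ dRin G v A2) ∧
  (∀ v ∈ B1, (1/2 - 2*ε) * (n : ℝ) ≤ dRin G v B2) ∧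
  ((eBip G A1 B2 : ℝ) ≤ ε * (n : ℝ) ^ 2 ∨ (eBip G B1 A2 : ℝ) ≤ ε * (n : ℝ) ^ 2)

/-- **Stability implies niceness of the collection.**
For `0 < 1/n ≪ μ' ≪ α ≪ γ, ε ≪ δ ≪ 1`: if `𝒢 = {G 1, …, G n}` is a collection of
bipartite graphs on `V₁ ∪ V₂` (sides of size `n`), with a fixed characteristic partition
chosen for every `ε`-extremal member, and `𝒢` is `(γ,α,ε,δ)`-stable — i.e. either at
least `γn` of the graphs are `α`-nice (strongly stable), or the cross graph (whose
ordered-pair edge count appears below, an unordered edge counting twice) has at least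
`δn²` edges (weakly stable) — then `𝒢` is `μ'`-nice: `∑ᵢ e_{Gᵢ}(A,B) ≥ μ'n³` for all
`A ⊆ V₁`, `B ⊆ V₂` of size `⌊n/2⌋`. -/
lemma dRin_eq {n : ℕ} (G : Fin n → Fin n → Prop) (v : Fin n) (S : Finset (Fin n)) :
    dRin G v S = (S.filter (fun w => G v w)).card := by
  rw [dRin, Nat.card_eq_fintype_card, Fintype.card_subtype]
  congr 1; ext w; simp

lemma eBip_eq_sum {n : ℕ} (G : Fin n → Fin n → Prop) (A B : Finset (Fin n)) :
    eBip G A B = ∑ v ∈ A, (B.filter (fun w => G v w)).card := by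
  rw [eBip, Nat.card_eq_fintype_card, Fintype.card_subtype]
  have h1 : (univ.filter (fun p : Fin n × Fin n => p.1 ∈ A ∧ p.2 ∈ B ∧ G p.1 p.2))
      = (A ×ˢ B).filter (fun p => G p.1 p.2) := by
    ext p; simp [mem_product]; tauto
  rw [h1]
  rw [Finset.card_eq_sum_card_fiberwise (f := Prod.fst) (t := A)
    (fun p hp => by simp only [mem_coe, mem_filter, mem_product] at hp; exact hp.1.1)]
  refine Finset.sum_congr rfl fun v hv => ?_
  apply Finset.card_bij (fun p _ => p.2)
  · intro p hp
    simp only [mem_filter, mem_product] at hp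
    obtain ⟨⟨⟨_, h2⟩, h3⟩, h4⟩ := hp
    subst h4
    simp [mem_filter, h2, h3]
  · intro p hp q hq hpq
    simp only [mem_filter] at hp hq
    exact Prod.ext (hp.2.trans hq.2.symm) hpq
  · intro w hw
    simp only [mem_filter] at hw
    exact ⟨(v, w), by simp [mem_filter, mem_product, hv, hw.1, hw.2], rfl⟩

lemma deg_lb {n : ℕ} (G : Fin n → Fin n → Prop) (v : Fin n) (A2 B : Finset (Fin n))
    (ε : ℝ) (hdeg : (1/2 - 2*ε) * (n : ℝ) ≤ dRin G v A2)
    (hA2card : (A2.card : ℝ) = (1/2 - ε) * n) :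
    ((B ∩ A2).card : ℝ) - ε * n ≤ ((B.filter (fun w => G v w)).card : ℝ) := by
  have key : (B ∩ A2).card ≤ (B.filter (fun w => G v w)).card
      + (A2.filter (fun w => ¬ G v w)).card := by
    calc (B ∩ A2).card
        = ((B ∩ A2).filter (fun w => G v w)).card
          + ((B ∩ A2).filter (fun w => ¬ G v w)).card :=
          (Finset.card_filter_add_card_filter_not _).symm
      _ ≤ (B.filter (fun w => G v w)).card + (A2.filter (fun w => ¬ G v w)).card := by
          gcongr <;> [exact inter_subset_left; exact inter_subset_right]
  have split : (A2.filter (fun w => G v w)).card + (A2.filter (fun w => ¬ G v w)).card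
      = A2.card := Finset.card_filter_add_card_filter_not _
  rw [dRin_eq] at hdeg
  have h2 : ((A2.filter (fun w => ¬ G v w)).card : ℝ) ≤ ε * n := by
    have := congrArg (Nat.cast (R := ℝ)) split
    push_cast at this
    linarith
  have kcast : ((B ∩ A2).card : ℝ) ≤ ((B.filter (fun w => G v w)).card : ℝ)
      + ((A2.filter (fun w => ¬ G v w)).card : ℝ) := by exact_mod_cast key
  linarith

/-- Edge lower bound: `e(A,B) ≥ |A ∩ A1| * (|B ∩ A2| - ε n)` for a part `A1` whose
vertices have large degree into `A2`. -/
lemma edge_lb {n : ℕ} (G : Fin n → Fin n → Prop) (A1 A2 A B : Finset (Fin n)) (ε : ℝ)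
    (hdeg : ∀ v ∈ A1, (1/2 - 2*ε) * (n : ℝ) ≤ dRin G v A2)
    (hA2card : (A2.card : ℝ) = (1/2 - ε) * n) :
    ((A ∩ A1).card : ℝ) * (((B ∩ A2).card : ℝ) - ε * n) ≤ (eBip G A B : ℝ) := by
  have hsum : (eBip G A B : ℝ) = ∑ v ∈ A, ((B.filter (fun w => G v w)).card : ℝ) := by
    rw [eBip_eq_sum]; push_cast; ring
  rw [hsum]
  calc ((A ∩ A1).card : ℝ) * (((B ∩ A2).card : ℝ) - ε * n)
      = ∑ _v ∈ A ∩ A1, (((B ∩ A2).card : ℝ) - ε * n) := by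
        rw [Finset.sum_const, nsmul_eq_mul]
    _ ≤ ∑ v ∈ A ∩ A1, ((B.filter (fun w => G v w)).card : ℝ) := by
        refine Finset.sum_le_sum fun v hv => ?_
        exact deg_lb G v A2 B ε (hdeg v (mem_inter.mp hv).2) hA2card
    _ ≤ ∑ v ∈ A, ((B.filter (fun w => G v w)).card : ℝ) := by
        refine Finset.sum_le_sum_of_subset_of_nonneg inter_subset_left fun v _ _ => ?_
        positivity

lemma card_symmDiff' {α : Type*} [DecidableEq α] (s t : Finset α) :
    ((s ∆ t).card : ℝ) = (s.card : ℝ) + t.card - 2 * (s ∩ t).card := by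
  have h1 : (s ∆ t).card = (s \ t).card + (t \ s).card := by
    rw [symmDiff_def, sup_eq_union, Finset.card_union_of_disjoint (disjoint_sdiff_sdiff)]
  have h2 : (s \ t).card + (s ∩ t).card = s.card := Finset.card_sdiff_add_card_inter s t
  have h3 : (t \ s).card + (t ∩ s).card = t.card := Finset.card_sdiff_add_card_inter t s
  rw [inter_comm] at h3
  have := congrArg (Nat.cast (R := ℝ)) h1
  have h2' := congrArg (Nat.cast (R := ℝ)) h2
  have h3' := congrArg (Nat.cast (R := ℝ)) h3
  push_cast at *
  linarith


lemma arith1 (ν N a1 b1 a2 b2 E : ℝ)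
    (hν : 0 < ν) (hν' : ν ≤ 1/10000) (hN : 1 ≤ ν * N)
    (h1 : N/2 - 3*ν*N ≤ a1 + b1) (h2 : N/2 - 3*ν*N ≤ a2 + b2)
    (h3 : a1 * (a2 - ν*N) ≤ E) (h4 : b1 * (b2 - ν*N) ≤ E)
    (ha1 : 0 ≤ a1) (hb1 : 0 ≤ b1) (ha2 : 0 ≤ a2) (hb2 : 0 ≤ b2)
    (hb2' : b2 ≤ N/2)
    (hE : E < ν*N^2) (hbig : N/5 ≤ a1) :
    N/2 - 6*ν*N ≤ a1 := by
  have hN0 : 0 < N := by nlinarith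
  have step1 : a2 ≤ 6*ν*N := by
    by_contra h
    push_neg at h
    have h5 : 0 ≤ a2 - ν*N := by nlinarith
    have h6 : (N/5) * (a2 - ν*N) ≤ a1 * (a2 - ν*N) := mul_le_mul_of_nonneg_right hbig h5
    nlinarith
  have step2 : N/2 - 9*ν*N ≤ b2 := by nlinarith
  have step3 : b1 ≤ 3*ν*N := by
    have h7 : N/3 ≤ b2 - ν*N := by nlinarith
    have h8 : b1 * (N/3) ≤ b1 * (b2 - ν*N) := mul_le_mul_of_nonneg_left h7 hb1
    nlinarith
  nlinarith

lemma arith_main (ν N a1 b1 a2 b2 E : ℝ)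
    (hν : 0 < ν) (hν' : ν ≤ 1/10000) (hN : 1 ≤ ν * N)
    (h1 : N/2 - 3*ν*N ≤ a1 + b1) (h2 : N/2 - 3*ν*N ≤ a2 + b2)
    (h3 : a1 * (a2 - ν*N) ≤ E) (h4 : b1 * (b2 - ν*N) ≤ E)
    (ha1 : 0 ≤ a1) (hb1 : 0 ≤ b1) (ha2 : 0 ≤ a2) (hb2 : 0 ≤ b2)
    (ha2' : a2 ≤ N/2) (hb2' : b2 ≤ N/2)
    (hE : E < ν*N^2) :
    N/2 - 6*ν*N ≤ a1 ∨ N/2 - 6*ν*N ≤ b1 := by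
  have hN0 : 0 < N := by nlinarith
  rcases le_or_gt (N/5) a1 with h | h
  · exact Or.inl (arith1 ν N a1 b1 a2 b2 E hν hν' hN h1 h2 h3 h4 ha1 hb1 ha2 hb2 hb2' hE h)
  · have hb : N/5 ≤ b1 := by nlinarith
    exact Or.inr (arith1 ν N b1 a1 b2 a2 E hν hν' hN (by linarith) (by linarith) h4 h3 hb1 ha1 hb2 ha2 ha2' hE hb)

lemma floor_half_bounds (n : ℕ) :
    (n : ℝ)/2 - 1/2 ≤ ((n / 2 : ℕ) : ℝ) ∧ ((n / 2 : ℕ) : ℝ) ≤ (n : ℝ)/2 := by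
  have h : 2 * (n/2) + n % 2 = n := Nat.div_add_mod n 2
  have hm : n % 2 ≤ 1 := Nat.lt_succ_iff.mp (Nat.mod_lt n (by norm_num))
  have hc : 2 * ((n/2 : ℕ) : ℝ) + ((n % 2 : ℕ) : ℝ) = (n : ℝ) := by exact_mod_cast h
  have hm' : ((n % 2 : ℕ) : ℝ) ≤ 1 := by exact_mod_cast hm
  have h0 : (0:ℝ) ≤ ((n % 2 : ℕ) : ℝ) := Nat.cast_nonneg _
  constructor <;> linarith

lemma cover_bound {n : ℕ} (A A1 B1 C1 : Finset (Fin n)) (hu : A1 ∪ B1 ∪ C1 = univ) :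
    A.card ≤ (A ∩ A1).card + (A ∩ B1).card + (A ∩ C1).card := by
  have heq : A = (A ∩ A1) ∪ (A ∩ B1) ∪ (A ∩ C1) := by
    rw [← inter_union_distrib_left, ← inter_union_distrib_left, hu, inter_univ]
  calc A.card = ((A ∩ A1) ∪ (A ∩ B1) ∪ (A ∩ C1)).card := by rw [← heq]
    _ ≤ ((A ∩ A1) ∪ (A ∩ B1)).card + (A ∩ C1).card := card_union_le _ _
    _ ≤ (A ∩ A1).card + (A ∩ B1).card + (A ∩ C1).card := by
        have := card_union_le (A ∩ A1) (A ∩ B1); omega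

set_option maxHeartbeats 1000000 in
/-- Per-graph closeness lemma. -/
lemma close_lemma {n : ℕ} (G : Fin n → Fin n → Prop)
    (A1 B1 C1 A2 B2 C2 A B : Finset (Fin n)) (ε ν : ℝ)
    (hε : 0 < ε) (hεν : ε ≤ ν) (hν' : ν ≤ 1/10000) (hN : 1 ≤ ν * n)
    (hcp : isCharPart ε G A1 B1 C1 A2 B2 C2)
    (hA : A.card = n / 2) (hB : B.card = n / 2)
    (hE : (eBip G A B : ℝ) < ν * (n : ℝ)^2) :
    ((A ∆ A1).card : ℝ) ≤ 12 * ν * n ∨ ((A ∆ B1).card : ℝ) ≤ 12 * ν * n := by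
  obtain ⟨⟨hu1, hc1⟩, ⟨hu2, hc2⟩, hA1c, hB1c, hC1c, hA2c, hB2c, hC2c,
    hdA2, hdB2, hdA1, hdB1, _⟩ := hcp
  have hν : 0 < ν := lt_of_lt_of_le hε hεν
  have hN0 : (0:ℝ) < n := by nlinarith
  have hεN : ε * (n:ℝ) ≤ ν * (n:ℝ) := mul_le_mul_of_nonneg_right hεν hN0.le
  have hAf := floor_half_bounds n
  have hAcard : (n:ℝ)/2 - 1/2 ≤ (A.card : ℝ) ∧ (A.card : ℝ) ≤ (n:ℝ)/2 := by
    rw [hA]; exact hAf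
  have hBcard : (n:ℝ)/2 - 1/2 ≤ (B.card : ℝ) ∧ (B.card : ℝ) ≤ (n:ℝ)/2 := by
    rw [hB]; exact hAf
  have h1 : (n:ℝ)/2 - 3*ν*n ≤ ((A ∩ A1).card : ℝ) + ((A ∩ B1).card : ℝ) := by
    have hcb := cover_bound A A1 B1 C1 hu1
    have hcst : ((A ∩ C1).card : ℝ) ≤ 2 * ε * n := by
      rw [← hC1c]; exact_mod_cast card_le_card inter_subset_right
    have hcast : ((A.card : ℕ) : ℝ) ≤ ((A ∩ A1).card : ℝ) + ((A ∩ B1).card : ℝ)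
        + ((A ∩ C1).card : ℝ) := by exact_mod_cast hcb
    linarith [hAcard.1]
  have h2 : (n:ℝ)/2 - 3*ν*n ≤ ((B ∩ A2).card : ℝ) + ((B ∩ B2).card : ℝ) := by
    have hcb := cover_bound B A2 B2 C2 hu2
    have hcst : ((B ∩ C2).card : ℝ) ≤ 2 * ε * n := by
      rw [← hC2c]; exact_mod_cast card_le_card inter_subset_right
    have hcast : ((B.card : ℕ) : ℝ) ≤ ((B ∩ A2).card : ℝ) + ((B ∩ B2).card : ℝ)
        + ((B ∩ C2).card : ℝ) := by exact_mod_cast hcb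
    linarith [hBcard.1]
  have h3 : ((A ∩ A1).card : ℝ) * (((B ∩ A2).card : ℝ) - ν*n) ≤ (eBip G A B : ℝ) := by
    have hlb := edge_lb G A1 A2 A B ε hdA1 hA2c
    have ha1nn : (0:ℝ) ≤ ((A ∩ A1).card : ℝ) := Nat.cast_nonneg _
    have := mul_le_mul_of_nonneg_left
      (by linarith : ((B ∩ A2).card : ℝ) - ν*n ≤ ((B ∩ A2).card : ℝ) - ε*n) ha1nn
    linarith
  have h4 : ((A ∩ B1).card : ℝ) * (((B ∩ B2).card : ℝ) - ν*n) ≤ (eBip G A B : ℝ) := by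
    have hlb := edge_lb G B1 B2 A B ε hdB1 hB2c
    have hb1nn : (0:ℝ) ≤ ((A ∩ B1).card : ℝ) := Nat.cast_nonneg _
    have := mul_le_mul_of_nonneg_left
      (by linarith : ((B ∩ B2).card : ℝ) - ν*n ≤ ((B ∩ B2).card : ℝ) - ε*n) hb1nn
    linarith
  have ha2' : ((B ∩ A2).card : ℝ) ≤ (n:ℝ)/2 := by
    have : ((B ∩ A2).card : ℝ) ≤ (A2.card : ℝ) := by
      exact_mod_cast card_le_card inter_subset_right
    rw [hA2c] at this
    nlinarith [mul_nonneg hε.le hN0.le]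
  have hb2' : ((B ∩ B2).card : ℝ) ≤ (n:ℝ)/2 := by
    have : ((B ∩ B2).card : ℝ) ≤ (B2.card : ℝ) := by
      exact_mod_cast card_le_card inter_subset_right
    rw [hB2c] at this
    nlinarith [mul_nonneg hε.le hN0.le]
  have main := arith_main ν (n:ℝ) ((A ∩ A1).card : ℝ) ((A ∩ B1).card : ℝ)
    ((B ∩ A2).card : ℝ) ((B ∩ B2).card : ℝ) (eBip G A B : ℝ) hν hν' hN h1 h2 h3 h4
    (Nat.cast_nonneg _) (Nat.cast_nonneg _) (Nat.cast_nonneg _) (Nat.cast_nonneg _)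
    ha2' hb2' hE
  rcases main with h | h
  · left
    rw [card_symmDiff' A A1, hA1c]
    linarith [hAcard.2]
  · right
    rw [card_symmDiff' A B1, hB1c]
    linarith [hAcard.2]

lemma tri_card {n : ℕ} (X Y Z : Finset (Fin n)) :
    ((X ∆ Z).card : ℝ) ≤ ((X ∆ Y).card : ℝ) + ((Y ∆ Z).card : ℝ) := by
  have h : (X ∆ Z).card ≤ (X ∆ Y).card + (Y ∆ Z).card :=
    le_trans (card_le_card (symmDiff_triangle X Y Z)) (card_union_le _ _)
  exact_mod_cast h

lemma parts_disjoint {n : ℕ} (A1 B1 C1 : Finset (Fin n))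
    (hu : A1 ∪ B1 ∪ C1 = univ) (hc : A1.card + B1.card + C1.card = n) :
    A1 ∩ B1 = ∅ := by
  have h1 : (A1 ∪ B1 ∪ C1).card = n := by rw [hu, card_univ, Fintype.card_fin]
  have h2 : (A1 ∪ B1 ∪ C1).card ≤ (A1 ∪ B1).card + C1.card := card_union_le _ _
  have h3 : (A1 ∪ B1).card + (A1 ∩ B1).card = A1.card + B1.card :=
    card_union_add_card_inter _ _
  have h4 : (A1 ∪ B1).card ≤ A1.card + B1.card := card_union_le _ _
  have : (A1 ∩ B1).card = 0 := by omega
  exact card_eq_zero.mp this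

lemma flip_lemma {n : ℕ} (A B Z W C' : Finset (Fin n)) (hAB : A ∩ B = ∅)
    (hcover : Z ∪ W ∪ C' = univ) (hsize : (A.card : ℝ) = (W.card : ℝ)) (t : ℝ)
    (hBZ : ((B ∆ Z).card : ℝ) ≤ t) :
    ((A ∆ W).card : ℝ) ≤ 2 * t + 2 * (C'.card : ℝ) := by
  have hsub : A \ W ⊆ (A ∩ Z) ∪ (A ∩ C') := by
    intro x hx
    rw [mem_sdiff] at hx
    have hxu : x ∈ Z ∪ W ∪ C' := by rw [hcover]; exact mem_univ x
    simp only [mem_union] at hxu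
    rcases hxu with (h | h) | h
    · exact mem_union_left _ (mem_inter.mpr ⟨hx.1, h⟩)
    · exact absurd h hx.2
    · exact mem_union_right _ (mem_inter.mpr ⟨hx.1, h⟩)
  have h1 : (A \ W).card ≤ (A ∩ Z).card + (A ∩ C').card :=
    le_trans (card_le_card hsub) (card_union_le _ _)
  have h2 : A ∩ Z ⊆ Z \ B := by
    intro x hx
    rw [mem_inter] at hx
    rw [mem_sdiff]
    refine ⟨hx.2, fun hxB => ?_⟩
    have : x ∈ A ∩ B := mem_inter.mpr ⟨hx.1, hxB⟩
    simp [hAB] at this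
  have h3 : Z \ B ⊆ B ∆ Z := by
    intro x hx
    rw [symmDiff_def, sup_eq_union, mem_union]
    exact Or.inr hx
  have h4 : ((A ∩ Z).card : ℝ) ≤ t :=
    le_trans (by exact_mod_cast card_le_card (h2.trans h3)) hBZ
  have h5 : ((A ∩ C').card : ℝ) ≤ (C'.card : ℝ) := by
    exact_mod_cast card_le_card inter_subset_right
  -- |A Δ W| = |A\W| + |W\A| and |W\A| = |A\W| since |A| = |W|
  have e1 : (A ∆ W).card = (A \ W).card + (W \ A).card := by
    rw [symmDiff_def, sup_eq_union, Finset.card_union_of_disjoint (disjoint_sdiff_sdiff)]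
  have e2 : (A \ W).card + (A ∩ W).card = A.card := Finset.card_sdiff_add_card_inter A W
  have e3 : (W \ A).card + (W ∩ A).card = W.card := Finset.card_sdiff_add_card_inter W A
  rw [inter_comm] at e3
  have e1' : ((A ∆ W).card : ℝ) = ((A \ W).card : ℝ) + ((W \ A).card : ℝ) := by
    exact_mod_cast e1
  have e2' : ((A \ W).card : ℝ) + ((A ∩ W).card : ℝ) = (A.card : ℝ) := by exact_mod_cast e2
  have e3' : ((W \ A).card : ℝ) + ((A ∩ W).card : ℝ) = (W.card : ℝ) := by exact_mod_cast e3
  have h1' : ((A \ W).card : ℝ) ≤ ((A ∩ Z).card : ℝ) + ((A ∩ C').card : ℝ) := by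
    exact_mod_cast h1
  linarith


set_option maxHeartbeats 1000000

theorem stable_implies_nice :
    ∃ δ0 : ℝ, 0 < δ0 ∧ ∀ δ : ℝ, 0 < δ → δ ≤ δ0 →
    ∃ c1 : ℝ, 0 < c1 ∧ ∀ γ ε : ℝ, 0 < γ → γ ≤ c1 → 0 < ε → ε ≤ c1 →
    ∃ α0 : ℝ, 0 < α0 ∧ ∀ α : ℝ, 0 < α → α ≤ α0 →
    ∃ μ0 : ℝ, 0 < μ0 ∧ ∀ μ' : ℝ, 0 < μ' → μ' ≤ μ0 →
    ∃ n0 : ℕ, ∀ n : ℕ, n0 ≤ n →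
    ∀ G : Fin n → Fin n → Fin n → Prop,
    ∀ A1 B1 C1 A2 B2 C2 : Fin n → Finset (Fin n),
    (∀ i, isExtremal ε (G i) →
      isCharPart ε (G i) (A1 i) (B1 i) (C1 i) (A2 i) (B2 i) (C2 i)) →
    (γ * (n : ℝ) ≤ ((univ.filter (fun i : Fin n => isNice α (G i))).card : ℝ) ∨
     2 * δ * (n : ℝ) ^ 2 ≤ (Nat.card {p : Fin n × Fin n //
        isExtremal ε (G p.1) ∧ isExtremal ε (G p.2) ∧
        δ * (n : ℝ) ≤ ((A1 p.1 ∆ A1 p.2).card : ℝ) ∧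
        δ * (n : ℝ) ≤ ((A1 p.1 ∆ B1 p.2).card : ℝ)} : ℝ)) →
    ∀ A B : Finset (Fin n), A.card = n / 2 → B.card = n / 2 →
      μ' * (n : ℝ) ^ 3 ≤ ∑ i : Fin n, (eBip (G i) A B : ℝ) := by
  refine ⟨1/100, by norm_num, fun δ hδ hδ0 => ?_⟩
  refine ⟨δ/100, by positivity, fun γ ε hγ hγ1 hε hε1 => ?_⟩
  refine ⟨1, one_pos, fun α hα hα1 => ?_⟩
  refine ⟨min (γ*α) (δ^2/100), lt_min (by positivity) (by positivity),
    fun μ' hμ hμ0 => ?_⟩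
  refine ⟨max ⌈(100:ℝ)/δ⌉₊ ⌈(1:ℝ)/α⌉₊, fun n hn G A1 B1 C1 A2 B2 C2 hcp hstab A B hA hB => ?_⟩
  have hn1 : ((100:ℝ)/δ) ≤ n := by
    have := le_trans (le_max_left ⌈(100:ℝ)/δ⌉₊ ⌈(1:ℝ)/α⌉₊) hn
    exact_mod_cast le_trans (Nat.le_ceil _) (by exact_mod_cast this)
  have hn2 : ((1:ℝ)/α) ≤ n := by
    have := le_trans (le_max_right ⌈(100:ℝ)/δ⌉₊ ⌈(1:ℝ)/α⌉₊) hn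
    exact_mod_cast le_trans (Nat.le_ceil _) (by exact_mod_cast this)
  have hδn : (100:ℝ) ≤ δ * n := by
    have := (div_le_iff₀ hδ).mp hn1; linarith [this]
  have hαn : (1:ℝ) ≤ α * n := by
    have := (div_le_iff₀ hα).mp hn2; linarith [this]
  have hn0 : (0:ℝ) < n := by nlinarith
  have hνn : 1 ≤ (δ/100) * (n:ℝ) := by linarith
  have hν' : δ/100 ≤ 1/10000 := by linarith
  have hεν : ε ≤ δ/100 := hε1
  have hAf := floor_half_bounds n
  have hAcard : (n:ℝ)/2 - 1/2 ≤ (A.card : ℝ) ∧ (A.card : ℝ) ≤ (n:ℝ)/2 := by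
    rw [hA]; exact hAf
  have hBcard : (n:ℝ)/2 - 1/2 ≤ (B.card : ℝ) ∧ (B.card : ℝ) ≤ (n:ℝ)/2 := by
    rw [hB]; exact hAf
  rcases hstab with hstrong | hweak
  · -- strongly stable case
    have hAge : (1/2 - α) * (n:ℝ) ≤ (A.card : ℝ) := by nlinarith [hAcard.1]
    have hBge : (1/2 - α) * (n:ℝ) ≤ (B.card : ℝ) := by nlinarith [hBcard.1]
    set F := univ.filter (fun i : Fin n => isNice α (G i)) with hF
    have hsum1 : (F.card : ℝ) * (α * (n:ℝ)^2) ≤ ∑ i ∈ F, (eBip (G i) A B : ℝ) := by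
      calc (F.card : ℝ) * (α * (n:ℝ)^2) = ∑ _i ∈ F, α * (n:ℝ)^2 := by
            rw [Finset.sum_const, nsmul_eq_mul]
        _ ≤ ∑ i ∈ F, (eBip (G i) A B : ℝ) := by
            refine Finset.sum_le_sum fun i hi => ?_
            exact (mem_filter.mp hi).2 A B hAge hBge
    have hsum2 : ∑ i ∈ F, (eBip (G i) A B : ℝ) ≤ ∑ i : Fin n, (eBip (G i) A B : ℝ) :=
      Finset.sum_le_sum_of_subset_of_nonneg (subset_univ F) (fun i _ _ => by positivity)
    have hμγα : μ' ≤ γ * α := le_trans hμ0 (min_le_left _ _)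
    have hmul : γ * (n:ℝ) * (α * (n:ℝ)^2) ≤ (F.card : ℝ) * (α * (n:ℝ)^2) := by
      have : (0:ℝ) ≤ α * (n:ℝ)^2 := by positivity
      exact mul_le_mul_of_nonneg_right hstrong this
    nlinarith [hsum1, hsum2, hmul, sq_nonneg (n:ℝ), mul_pos hn0 (mul_pos hn0 hn0)]
  · -- weakly stable case
    rw [Nat.card_eq_fintype_card, Fintype.card_subtype] at hweak
    set S := univ.filter (fun p : Fin n × Fin n =>
        isExtremal ε (G p.1) ∧ isExtremal ε (G p.2) ∧
        δ * (n : ℝ) ≤ ((A1 p.1 ∆ A1 p.2).card : ℝ) ∧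
        δ * (n : ℝ) ≤ ((A1 p.1 ∆ B1 p.2).card : ℝ)) with hS
    have key : ∀ p ∈ S, (δ/100) * (n:ℝ)^2 ≤ (eBip (G p.1) A B : ℝ) + (eBip (G p.2) A B : ℝ) := by
      intro p hp
      obtain ⟨hex1, hex2, hd1, hd2⟩ := (mem_filter.mp hp).2
      by_contra hcon
      push_neg at hcon
      have hpos1 : (0:ℝ) ≤ (eBip (G p.1) A B : ℝ) := Nat.cast_nonneg _
      have hpos2 : (0:ℝ) ≤ (eBip (G p.2) A B : ℝ) := Nat.cast_nonneg _
      have hE1 : (eBip (G p.1) A B : ℝ) < (δ/100) * (n:ℝ)^2 := by linarith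
      have hE2 : (eBip (G p.2) A B : ℝ) < (δ/100) * (n:ℝ)^2 := by linarith
      have hcp1 := hcp p.1 hex1
      have hcp2 := hcp p.2 hex2
      have hclose1 := close_lemma (G p.1) (A1 p.1) (B1 p.1) (C1 p.1) (A2 p.1) (B2 p.1)
        (C2 p.1) A B ε (δ/100) hε hεν hν' hνn hcp1 hA hB hE1
      have hclose2 := close_lemma (G p.2) (A1 p.2) (B1 p.2) (C1 p.2) (A2 p.2) (B2 p.2)
        (C2 p.2) A B ε (δ/100) hε hεν hν' hνn hcp2 hA hB hE2
      have hdisj1 : A1 p.1 ∩ B1 p.1 = ∅ :=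
        parts_disjoint _ _ _ hcp1.1.1 hcp1.1.2
      have hcover2 : A1 p.2 ∪ B1 p.2 ∪ C1 p.2 = univ := hcp2.1.1
      have hC2card : ((C1 p.2).card : ℝ) = 2 * ε * n := hcp2.2.2.2.2.1
      have hA1i : ((A1 p.1).card : ℝ) = (1/2 - ε) * n := hcp1.2.2.1
      have hB1i : ((B1 p.1).card : ℝ) = (1/2 - ε) * n := hcp1.2.2.2.1
      have hA1j : ((A1 p.2).card : ℝ) = (1/2 - ε) * n := hcp2.2.2.1
      have hB1j : ((B1 p.2).card : ℝ) = (1/2 - ε) * n := hcp2.2.2.2.1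
      have hδn0 : (0:ℝ) < δ * n := by nlinarith
      have hεn : ε * (n:ℝ) ≤ (δ/100) * n := mul_le_mul_of_nonneg_right hεν hn0.le
      rcases hclose1 with hAi | hBi <;> rcases hclose2 with hAj | hBj
      · -- A ≈ A1 i and A ≈ A1 j : contradict hd1
        have htri := tri_card (A1 p.1) A (A1 p.2)
        rw [symmDiff_comm (A1 p.1) A] at htri
        linarith
      · -- A ≈ A1 i and A ≈ B1 j : contradict hd2
        have htri := tri_card (A1 p.1) A (B1 p.2)
        rw [symmDiff_comm (A1 p.1) A] at htri
        linarith
      · -- A ≈ B1 i and A ≈ A1 j : flip to contradict hd2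
        have htri := tri_card (B1 p.1) A (A1 p.2)
        rw [symmDiff_comm (B1 p.1) A] at htri
        have hflip := flip_lemma (A1 p.1) (B1 p.1) (A1 p.2) (B1 p.2) (C1 p.2) hdisj1
          hcover2 (by rw [hA1i, hB1j]) (24 * (δ/100) * n) (by linarith)
        rw [hC2card] at hflip
        linarith
      · -- A ≈ B1 i and A ≈ B1 j : flip to contradict hd1
        have htri := tri_card (B1 p.1) A (B1 p.2)
        rw [symmDiff_comm (B1 p.1) A] at htri
        have hcover2' : B1 p.2 ∪ A1 p.2 ∪ C1 p.2 = univ := by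
          rw [← hcover2]; congr 1; exact union_comm _ _
        have hflip := flip_lemma (A1 p.1) (B1 p.1) (B1 p.2) (A1 p.2) (C1 p.2) hdisj1
          hcover2' (by rw [hA1i, hA1j]) (24 * (δ/100) * n) (by linarith)
        rw [hC2card] at hflip
        linarith
    -- summation over the crossing pairs
    have hsum1 : (S.card : ℝ) * ((δ/100) * (n:ℝ)^2)
        ≤ ∑ p ∈ S, ((eBip (G p.1) A B : ℝ) + (eBip (G p.2) A B : ℝ)) := by
      calc (S.card : ℝ) * ((δ/100) * (n:ℝ)^2)
          = ∑ _p ∈ S, (δ/100) * (n:ℝ)^2 := by rw [Finset.sum_const, nsmul_eq_mul]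
        _ ≤ _ := Finset.sum_le_sum key
    have hsum2 : ∑ p ∈ S, ((eBip (G p.1) A B : ℝ) + (eBip (G p.2) A B : ℝ))
        ≤ ∑ p : Fin n × Fin n, ((eBip (G p.1) A B : ℝ) + (eBip (G p.2) A B : ℝ)) :=
      Finset.sum_le_sum_of_subset_of_nonneg (subset_univ S) (fun p _ _ => by positivity)
    have hsum3 : ∑ p : Fin n × Fin n, ((eBip (G p.1) A B : ℝ) + (eBip (G p.2) A B : ℝ))
        = 2 * (n:ℝ) * ∑ i : Fin n, (eBip (G i) A B : ℝ) := by
      rw [Fintype.sum_prod_type]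
      simp only [Finset.sum_add_distrib, Finset.sum_const, card_univ, Fintype.card_fin,
        nsmul_eq_mul, ← Finset.sum_mul, ← Finset.mul_sum]
      ring
    have hScardge : 2 * δ * (n:ℝ)^2 ≤ (S.card : ℝ) := hweak
    have hstep : 2 * δ * (n:ℝ)^2 * ((δ/100) * (n:ℝ)^2)
        ≤ 2 * (n:ℝ) * ∑ i : Fin n, (eBip (G i) A B : ℝ) := by
      have h0 : (0:ℝ) ≤ (δ/100) * (n:ℝ)^2 := by positivity
      have := mul_le_mul_of_nonneg_right hScardge h0
      linarith
    have hfinal : δ * (δ/100) * (n:ℝ)^3 ≤ ∑ i : Fin n, (eBip (G i) A B : ℝ) := by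
      have h2n : (0:ℝ) < 2 * n := by positivity
      have heq : 2 * δ * (n:ℝ)^2 * ((δ/100) * (n:ℝ)^2)
          = (2 * (n:ℝ)) * (δ * (δ/100) * (n:ℝ)^3) := by ring
      rw [heq] at hstep
      exact le_of_mul_le_mul_left (by linarith [hstep]) h2n
    have hμδ : μ' ≤ δ * (δ/100) := by
      have := le_trans hμ0 (min_le_right _ _); linarith [this]
    have hn3 : (0:ℝ) ≤ (n:ℝ)^3 := by positivity
    nlinarith [mul_le_mul_of_nonneg_right hμδ hn3]
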